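/- Let ℓ₁,...,ℓₙ ∈ K[x₁,x₂] be pairwise non-proportional linear forms spanning all linear forms (n ≥ 2). Then for every 1 ≤ b ≤ n−1, the ideal generated by all b-fold products ℓ_{i₁}⋯ℓ_{i_b} (i₁ < ⋯ < i_b) equals ⟨x₁,x₂⟩^b. -/

import Mathlib

open MvPolynomial Finset Pointwise

section Aux

variable {K : Type*} [Field K]

private lemma degree_fin2 (d : Fin 2 →₀ ℕ) : d.degree = d 0 + d 1 := by
  rw [Finsupp.degree, ← Fin.sum_univ_two (fun i => d i)]
  exact Finset.sum_subset (Finset.subset_univ _)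
    (fun x _ hx => Finsupp.notMem_support_iff.mp hx)

private lemma classify_deg1 (d : Fin 2 →₀ ℕ) (h : d 0 + d 1 = 1) :
    d = Finsupp.single 0 1 ∨ d = Finsupp.single 1 1 := by
  rcases Nat.eq_zero_or_pos (d 0) with h0 | h0
  · right; ext i; fin_cases i <;> simp [Finsupp.single_apply] <;> omega
  · left; ext i; fin_cases i <;> simp [Finsupp.single_apply] <;> omega

/-- A homogeneous polynomial of degree 1 in two variables is `a • X 0 + c • X 1`. -/
private lemma repr1 (f : MvPolynomial (Fin 2) K) (hf : f.IsHomogeneous 1) :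
    f = C (coeff (Finsupp.single 0 1) f) * X 0 + C (coeff (Finsupp.single 1 1) f) * X 1 := by
  have hsub : f.support ⊆ {Finsupp.single 0 1, Finsupp.single 1 1} := by
    intro d hd
    have hc : coeff d f ≠ 0 := mem_support_iff.mp hd
    have hdeg : d.degree = 1 := by
      have := hf hc
      rwa [show (1 : Fin 2 → ℕ) = fun _ => 1 from rfl, ← Finsupp.degree_eq_weight_one] at this
    rw [degree_fin2] at hdeg
    rcases classify_deg1 d hdeg with h | h <;> simp [h]
  have hne : (Finsupp.single (0 : Fin 2) 1) ≠ Finsupp.single 1 1 := by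
    intro h
    have := DFunLike.congr_fun h (0 : Fin 2)
    simp [Finsupp.single_apply] at this
  conv_lhs => rw [f.as_sum]
  rw [Finset.sum_subset hsub (fun x _ hx => by
    rw [notMem_support_iff.mp hx, monomial_zero])]
  rw [Finset.sum_pair hne]
  congr 1 <;> simp [monomial_eq, Finsupp.prod_single_index]

private lemma eval_repr1 (f : MvPolynomial (Fin 2) K) (hf : f.IsHomogeneous 1) (v : Fin 2 → K) :
    eval v f = coeff (Finsupp.single 0 1) f * v 0 + coeff (Finsupp.single 1 1) f * v 1 := by
  conv_lhs => rw [repr1 f hf]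
  simp

private lemma det_prop {a1 c1 a2 c2 : K} (h : a1 * c2 = c1 * a2) (h2 : ¬(a2 = 0 ∧ c2 = 0)) :
    ∃ t : K, a1 = t * a2 ∧ c1 = t * c2 := by
  by_cases ha : a2 = 0
  · have hc2 : c2 ≠ 0 := fun hc => h2 ⟨ha, hc⟩
    refine ⟨c1 / c2, ?_, by field_simp⟩
    have : a1 * c2 = 0 := by rw [h, ha, mul_zero]
    rcases mul_eq_zero.mp this with h' | h'
    · rw [h', ha, mul_zero]
    · exact absurd h' hc2
  · refine ⟨a1 / a2, by field_simp, ?_⟩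
    field_simp
    linear_combination -h

private lemma prod_mem_pow {R : Type*} [CommRing R] (J : Ideal R) {ι : Type*} (S : Finset ι)
    (g : ι → R) (h : ∀ i ∈ S, g i ∈ J) : ∏ i ∈ S, g i ∈ J ^ S.card := by
  classical
  induction S using Finset.cons_induction with
  | empty => simp [Ideal.one_eq_top]
  | cons a S ha IH =>
    rw [Finset.prod_cons, Finset.card_cons, pow_succ']
    exact Ideal.mul_mem_mul (h a (Finset.mem_cons_self a S))
      (IH (fun i hi => h i (Finset.mem_cons_of_mem hi)))

private lemma mem_pow_isHomogeneous {s : Set (MvPolynomial (Fin 2) K)}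
    (hs : ∀ y ∈ s, y.IsHomogeneous 1) :
    ∀ (b : ℕ) (x : MvPolynomial (Fin 2) K), x ∈ s ^ b → x.IsHomogeneous b := by
  intro b
  induction b with
  | zero =>
    intro x hx
    rw [pow_zero, Set.mem_one] at hx
    rw [hx]
    exact isHomogeneous_one _ _
  | succ b IH =>
    intro x hx
    rw [pow_succ] at hx
    rcases Set.mem_mul.mp hx with ⟨y, hy, z, hz, rfl⟩
    exact (IH y hy).mul (hs z hz)

end Aux

/-- For pairwise non-proportional linear forms `ℓ₁,...,ℓₙ` in `K[x₁,x₂]` spanning all linear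
forms (`n ≥ 2`), for every `1 ≤ b ≤ n-1` the ideal of `b`-fold products equals `⟨x₁,x₂⟩^b`. -/
theorem stmt4 {K : Type*} [Field K] [CharZero K] {n : ℕ} (hn : 2 ≤ n)
    (ℓ : Fin n → MvPolynomial (Fin 2) K)
    (hhom : ∀ i, (ℓ i).IsHomogeneous 1)
    (hne : ∀ i, ℓ i ≠ 0)
    (hprop : ∀ i j : Fin n, i ≠ j → ∀ c : K, ℓ i ≠ c • ℓ j)
    (hspan : ∀ g : MvPolynomial (Fin 2) K, g.IsHomogeneous 1 →
      g ∈ Submodule.span K (Set.range ℓ))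
    (b : ℕ) (hb1 : 1 ≤ b) (hbn : b ≤ n - 1) :
    Ideal.span {p : MvPolynomial (Fin 2) K |
        ∃ S : Finset (Fin n), S.card = b ∧ p = ∏ i ∈ S, ℓ i}
      = (Ideal.span {X 0, X 1} : Ideal (MvPolynomial (Fin 2) K)) ^ b := by
  classical
  set I : Ideal (MvPolynomial (Fin 2) K) := Ideal.span {p : MvPolynomial (Fin 2) K |
        ∃ S : Finset (Fin n), S.card = b ∧ p = ∏ i ∈ S, ℓ i} with hI
  -- coefficients of the linear forms
  set A : Fin n → K := fun k => coeff (Finsupp.single 0 1) (ℓ k) with hA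
  set Cc : Fin n → K := fun k => coeff (Finsupp.single 1 1) (ℓ k) with hCc
  -- root of each linear form
  set v : Fin n → (Fin 2 → K) := fun k => ![Cc k, -(A k)] with hv
  have hA' : ∀ k, coeff (Finsupp.single 0 1) (ℓ k) = A k := fun _ => rfl
  have hCc' : ∀ k, coeff (Finsupp.single 1 1) (ℓ k) = Cc k := fun _ => rfl
  have hroot : ∀ k, eval (v k) (ℓ k) = 0 := by
    intro k
    rw [eval_repr1 (ℓ k) (hhom k)]
    simp [hv]
    ring
  have hAC : ∀ k, ¬(A k = 0 ∧ Cc k = 0) := by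
    rintro k ⟨h1, h2⟩
    apply hne k
    rw [repr1 (ℓ k) (hhom k), hA' k, hCc' k, h1, h2]
    simp
  have hnonvanish : ∀ i k, i ≠ k → eval (v k) (ℓ i) ≠ 0 := by
    intro i k hik h0
    rw [eval_repr1 (ℓ i) (hhom i)] at h0
    simp only [hv] at h0
    simp only [Matrix.cons_val_zero, Matrix.cons_val_one, Matrix.head_cons] at h0
    have hdet : A i * Cc k = Cc i * A k := by
      rw [hA' i, hCc' i] at h0; linear_combination h0
    obtain ⟨t, ht1, ht2⟩ := det_prop hdet (hAC k)
    apply hprop i k hik t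
    rw [repr1 (ℓ i) (hhom i), hA' i, hCc' i, ht1, ht2, MvPolynomial.smul_eq_C_mul]
    conv_rhs => rw [repr1 (ℓ k) (hhom k), hA' k, hCc' k]
    rw [C_mul, C_mul]
    ring
  -- the inclusion map of indices
  have hb1n : b + 1 ≤ n := by omega
  set e : Fin (b + 1) → Fin n := fun j => ⟨j.1, lt_of_lt_of_le j.2 hb1n⟩ with he
  have he_inj : Function.Injective e := by
    intro x y hxy
    apply Fin.ext
    have h2 : (e x).1 = (e y).1 := congrArg Fin.val hxy
    exact h2
  -- the b-fold products omitting one index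
  set p : Fin (b + 1) → MvPolynomial (Fin 2) K :=
    fun j => ∏ i ∈ univ.erase j, ℓ (e i) with hp
  have hpI : ∀ j, p j ∈ I := by
    intro j
    apply Ideal.subset_span
    refine ⟨Finset.image e (univ.erase j), ?_, ?_⟩
    · rw [Finset.card_image_of_injective _ he_inj, Finset.card_erase_of_mem (mem_univ j)]
      simp
    · rw [Finset.prod_image (fun x _ y _ h => he_inj h)]
  have hphom : ∀ j, (p j).IsHomogeneous b := by
    intro j
    have := IsHomogeneous.prod (univ.erase j) (fun i => ℓ (e i)) (fun _ => 1)
      (fun i _ => hhom (e i))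
    simpa [Finset.card_erase_of_mem (mem_univ j)] using this
  have heval0 : ∀ j k : Fin (b + 1), j ≠ k → eval (v (e k)) (p j) = 0 := by
    intro j k hjk
    rw [hp]
    simp only [map_prod]
    exact Finset.prod_eq_zero (Finset.mem_erase.mpr ⟨fun h => hjk h.symm, mem_univ k⟩)
      (hroot (e k))
  have hevalne : ∀ j : Fin (b + 1), eval (v (e j)) (p j) ≠ 0 := by
    intro j
    rw [hp]
    simp only [map_prod]
    apply Finset.prod_ne_zero_iff.mpr
    intro i hi
    exact hnonvanish (e i) (e j) (fun h => (Finset.mem_erase.mp hi).1 (he_inj h))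
  -- linear independence of the products
  have hindep : LinearIndependent K p := by
    rw [Fintype.linearIndependent_iff]
    intro g hg k
    have hg' : ∑ j : Fin (b + 1), C (g j) * p j = 0 := by
      rw [← hg]
      exact Finset.sum_congr rfl (fun j _ => (MvPolynomial.smul_eq_C_mul _ _).symm)
    have := congrArg (eval (v (e k))) hg'
    rw [map_sum, map_zero] at this
    simp only [map_mul, eval_C] at this
    rw [Finset.sum_eq_single k (fun j _ hjk => by rw [heval0 j k hjk, mul_zero])
      (fun h => absurd (mem_univ k) h)] at this
    exact (mul_eq_zero.mp this).resolve_right (hevalne k)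
  -- monomial spanning family of degree-b forms
  set q : Fin (b + 1) → MvPolynomial (Fin 2) K :=
    fun j => monomial (Finsupp.single 0 (j : ℕ) + Finsupp.single 1 (b - (j : ℕ))) 1 with hq
  set V : Submodule K (MvPolynomial (Fin 2) K) := homogeneousSubmodule (Fin 2) K b with hV
  have hVle : V ≤ Submodule.span K (Set.range q) := by
    intro f hf
    rw [mem_homogeneousSubmodule] at hf
    have key : (∑ m ∈ f.support, monomial m (coeff m f)) ∈ Submodule.span K (Set.range q) := by
      apply Submodule.sum_mem
      intro m hm
      have hc : coeff m f ≠ 0 := mem_support_iff.mp hm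
      have hdeg : m 0 + m 1 = b := by
        have := hf hc
        rw [show (1 : Fin 2 → ℕ) = fun _ => 1 from rfl, ← Finsupp.degree_eq_weight_one, degree_fin2] at this
        exact this
      have hm0 : m 0 < b + 1 := by omega
      have hmrepr : m = Finsupp.single 0 (m 0) + Finsupp.single 1 (b - m 0) := by
        ext i
        fin_cases i <;> simp [Finsupp.single_apply] <;> omega
      have hmq : monomial m (coeff m f) = coeff m f • q ⟨m 0, hm0⟩ := by
        rw [hq]
        simp only [MvPolynomial.smul_monomial, smul_eq_mul, mul_one]
        rw [← hmrepr]
      rw [hmq]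
      exact Submodule.smul_mem _ _ (Submodule.subset_span ⟨⟨m 0, hm0⟩, rfl⟩)
    rwa [← f.as_sum] at key
  have hfinq : FiniteDimensional K (Submodule.span K (Set.range q)) :=
    FiniteDimensional.span_of_finite K (Set.finite_range q)
  have hfinV : FiniteDimensional K V := Submodule.finiteDimensional_of_le hVle
  have hfrV : Module.finrank K V ≤ b + 1 := by
    refine le_trans (Submodule.finrank_mono hVle) ?_
    simpa [Set.finrank] using finrank_range_le_card (R := K) q
  -- the span of the products is all of V
  set W : Submodule K (MvPolynomial (Fin 2) K) := Submodule.span K (Set.range p) with hW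
  have hWV : W ≤ V := by
    rw [hW, Submodule.span_le]
    rintro x ⟨j, rfl⟩
    exact (mem_homogeneousSubmodule _ _).mpr (hphom j)
  have hfrW : Module.finrank K W = b + 1 := by
    rw [hW, finrank_span_eq_card hindep, Fintype.card_fin]
  have hWeqV : W = V := Submodule.eq_of_le_of_finrank_le hWV (by rw [hfrW]; exact hfrV)
  -- every homogeneous polynomial of degree b lies in I
  have hhomI : ∀ f : MvPolynomial (Fin 2) K, f.IsHomogeneous b → f ∈ I := by
    intro f hf
    have hfW : f ∈ W := hWeqV ▸ ((mem_homogeneousSubmodule _ _).mpr hf)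
    rw [hW] at hfW
    refine Submodule.span_induction ?_ ?_ ?_ ?_ hfW
    · rintro x ⟨j, rfl⟩; exact hpI j
    · exact I.zero_mem
    · intro x y _ _ hx hy; exact I.add_mem hx hy
    · intro c x _ hx
      rw [MvPolynomial.smul_eq_C_mul]
      exact I.mul_mem_left _ hx
  -- the easy inclusion
  apply le_antisymm
  · rw [hI, Ideal.span_le]
    rintro x ⟨S, hS, rfl⟩
    have : ∏ i ∈ S, ℓ i ∈ (Ideal.span {X 0, X 1} : Ideal (MvPolynomial (Fin 2) K)) ^ S.card := by
      apply prod_mem_pow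
      intro i _
      rw [repr1 (ℓ i) (hhom i)]
      exact Ideal.add_mem _
        (Ideal.mul_mem_left _ _ (Ideal.subset_span (Set.mem_insert _ _)))
        (Ideal.mul_mem_left _ _ (Ideal.subset_span (Set.mem_insert_of_mem _ rfl)))
    rwa [hS] at this
  · rw [show (Ideal.span {X 0, X 1} : Ideal (MvPolynomial (Fin 2) K)) ^ b
        = Ideal.span ({X 0, X 1} ^ b : Set (MvPolynomial (Fin 2) K)) from
      Submodule.span_pow _ b]
    rw [Ideal.span_le]
    intro x hx
    refine hhomI x (mem_pow_isHomogeneous ?_ b x hx)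
    rintro y (rfl | rfl)
    · exact isHomogeneous_X _ _
    · exact isHomogeneous_X _ _
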